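/- Let the infinite dihedral group D_∞ = ⟨s, t : s² = t² = e⟩ act freely and minimally by homeomorphisms on a nonempty compact Hausdorff space X. Then the dynamic asymptotic dimension of the action equals 1. -/

import Mathlib

open Pointwise

/-- The set F(U,E): elements `g = gₙ⋯g₁` with each `gⱼ ∈ E` such that for some `x ∈ U`
all partial translates `gⱼ⋯g₁ • x` (j = 1,…,n) remain in `U`. -/
def dynF {Γ X : Type*} [Group Γ] [MulAction Γ X] (U : Set X) (E : Set Γ) : Set Γ :=
  {g | ∃ L : List Γ, L ≠ [] ∧ (∀ h ∈ L, h ∈ E) ∧ g = L.reverse.prod ∧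
    ∃ x ∈ U, ∀ j : ℕ, 1 ≤ j → j ≤ L.length → (L.take j).reverse.prod • x ∈ U}

/-- The marker property for an action. -/
def MarkerProperty (Γ X : Type*) [Group Γ] [MulAction Γ X] [TopologicalSpace X] : Prop :=
  ∀ F : Finset Γ, ∃ U : Set X, IsOpen U ∧
    (F : Set Γ).PairwiseDisjoint (fun g => g • U) ∧ (⋃ g : Γ, g • U) = Set.univ

/-- The dynamic asymptotic dimension is at most `d`. -/
def DadLE (Γ X : Type*) [Group Γ] [MulAction Γ X] [TopologicalSpace X] (d : ℕ) : Prop :=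
  ∀ E : Finset Γ, ∃ U : Fin (d + 1) → Set X, (∀ i, IsOpen (U i)) ∧
    (⋃ i, U i) = Set.univ ∧ ∀ i, (dynF (U i) (E : Set Γ)).Finite

/-- The dynamic asymptotic dimension, as an extended natural number (`⊤` if no `d` works). -/
noncomputable def dad (Γ X : Type*) [Group Γ] [MulAction Γ X] [TopologicalSpace X] : ℕ∞ :=
  sInf ((fun d : ℕ => (d : ℕ∞)) '' {d : ℕ | DadLE Γ X d})

/-- A group is virtually cyclic if it has a cyclic subgroup of finite index. -/
def IsVirtuallyCyclic (Γ : Type*) [Group Γ] : Prop :=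
  ∃ H : Subgroup Γ, IsCyclic H ∧ H.FiniteIndex

/-- The covering dimension of `X` is at most `n`: every open cover admits an open
refinement covering `X` in which every point belongs to at most `n+1` members. -/
def CovDimLE (X : Type*) [TopologicalSpace X] (n : ℕ) : Prop :=
  ∀ 𝒰 : Set (Set X), (∀ U ∈ 𝒰, IsOpen U) → ⋃₀ 𝒰 = Set.univ →
    ∃ 𝒱 : Set (Set X), (∀ V ∈ 𝒱, IsOpen V) ∧ ⋃₀ 𝒱 = Set.univ ∧
      (∀ V ∈ 𝒱, ∃ U ∈ 𝒰, V ⊆ U) ∧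
      ∀ x : X, ∃ s : Finset (Set X), {V ∈ 𝒱 | x ∈ V} ⊆ ↑s ∧ s.card ≤ n + 1

namespace DadAuxNS

def pos : DihedralGroup 0 → ℤ
  | .r i => i
  | .sr i => i

@[simp] lemma inv_r (i : ZMod 0) : (DihedralGroup.r i)⁻¹ = DihedralGroup.r (-i) := rfl
@[simp] lemma inv_sr (i : ZMod 0) : (DihedralGroup.sr i)⁻¹ = DihedralGroup.sr i := rfl

lemma abs_pos_mul_inv (a b : DihedralGroup 0) : |pos (a * b⁻¹)| = |pos a - pos b| := by
  rcases a with i | i <;> rcases b with j | j <;>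
    simp only [inv_r, inv_sr, DihedralGroup.r_mul_r, DihedralGroup.r_mul_sr,
      DihedralGroup.sr_mul_r, DihedralGroup.sr_mul_sr, pos] <;>
    revert i j
  case r.r => exact fun i j : ℤ => by rw [sub_eq_add_neg]; rfl
  case r.sr => exact fun i j : ℤ => abs_sub_comm j i
  case sr.r => exact fun i j : ℤ => by rw [sub_eq_add_neg]; rfl
  case sr.sr => exact fun i j : ℤ => abs_sub_comm j i

lemma abs_pos_mul_sub (a b : DihedralGroup 0) : |pos (a * b) - pos b| = |pos a| := by
  have h := abs_pos_mul_inv (a * b) b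
  rw [mul_inv_cancel_right] at h
  rw [← h]

lemma abs_pos_inv (a : DihedralGroup 0) : |pos a⁻¹| = |pos a| := by
  have h := abs_pos_mul_inv 1 a
  rw [one_mul] at h
  rw [h, show pos 1 = 0 from rfl, zero_sub, abs_neg]

lemma finite_ball (R : ℤ) : {g : DihedralGroup 0 | |pos g| ≤ R}.Finite := by
  apply Set.Finite.subset (Set.Finite.union
    ((Set.finite_Icc (-R) R).image (fun i : ℤ => DihedralGroup.r i))
    ((Set.finite_Icc (-R) R).image (fun i : ℤ => DihedralGroup.sr i)))
  rintro (i | i) h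
  · exact Or.inl ⟨i, Set.mem_Icc.2 (abs_le.mp h), rfl⟩
  · exact Or.inr ⟨i, Set.mem_Icc.2 (abs_le.mp h), rfl⟩

section Action
variable {X : Type*} [TopologicalSpace X] [CompactSpace X] [T2Space X]
  [MulAction (DihedralGroup 0) X] [ContinuousConstSMul (DihedralGroup 0) X]

set_option linter.unusedSectionVars false

lemma exists_marker [Nonempty X]
    (hfree : ∀ (g : DihedralGroup 0) (x : X), g • x = x → g = 1) (R : ℤ) :
    ∃ V : Set X, IsOpen V ∧ V.Nonempty ∧
      ∀ g : DihedralGroup 0, g ≠ 1 → |pos g| ≤ R → Disjoint V (g • V) := by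
  obtain ⟨x₀⟩ := ‹Nonempty X›
  have hsep : ∀ g : DihedralGroup 0, ∃ A B : Set X, IsOpen A ∧ IsOpen B ∧ x₀ ∈ A ∧
      g • x₀ ∈ B ∧ (g ≠ 1 → Disjoint A B) := by
    intro g
    by_cases hg : g = 1
    · exact ⟨Set.univ, Set.univ, isOpen_univ, isOpen_univ, trivial, trivial,
        fun h => absurd hg h⟩
    · have hx : x₀ ≠ g • x₀ := fun h => hg (hfree g x₀ h.symm)
      obtain ⟨A, B, hA, hB, hxA, hxB, hAB⟩ := t2_separation hx
      exact ⟨A, B, hA, hB, hxA, hxB, fun _ => hAB⟩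
  choose A B hAo hBo hxA hgB hdis using hsep
  classical
  set S := (finite_ball R).toFinset with hS
  refine ⟨⋂ g ∈ S, (A g ∩ g⁻¹ • B g), ?_, ⟨x₀, ?_⟩, ?_⟩
  · exact isOpen_biInter_finset fun g _ => (hAo g).inter ((hBo g).smul _)
  · exact Set.mem_iInter₂.2 fun g _ =>
      ⟨hxA g, Set.mem_smul_set_iff_inv_smul_mem.2 (by simpa using hgB g)⟩
  · intro g hg hgR
    have hgS : g ∈ S := by simpa [hS] using hgR
    rw [Set.disjoint_left]
    intro y hyV hygV
    have hyA : y ∈ A g := (Set.mem_iInter₂.1 hyV g hgS).1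
    have h1 : g⁻¹ • y ∈ g⁻¹ • B g :=
      (Set.mem_iInter₂.1 (Set.mem_smul_set_iff_inv_smul_mem.1 hygV) g hgS).2
    have hyB : y ∈ B g := by
      rwa [Set.smul_mem_smul_set_iff] at h1
    exact Set.disjoint_left.mp (hdis g hg) hyA hyB

lemma exists_syndetic (hmin : ∀ x : X, Dense (MulAction.orbit (DihedralGroup 0) x))
    {V' : Set X} (hV'o : IsOpen V') (hV'ne : V'.Nonempty) :
    ∃ M : ℤ, 0 ≤ M ∧ ∀ z : X, ∃ h : DihedralGroup 0, |pos h| ≤ M ∧ h • z ∈ V' := by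
  have hcov : (Set.univ : Set X) ⊆ ⋃ g : DihedralGroup 0, g • V' := by
    intro z _
    obtain ⟨y, hy, hyV⟩ := (hmin z).exists_mem_open hV'o hV'ne
    obtain ⟨g, rfl⟩ := hy
    exact Set.mem_iUnion.2 ⟨g⁻¹, Set.mem_smul_set_iff_inv_smul_mem.2 (by simpa using hyV)⟩
  obtain ⟨F, hF⟩ := isCompact_univ.elim_finite_subcover (fun g : DihedralGroup 0 => g • V')
    (fun g => hV'o.smul g) hcov
  classical
  refine ⟨(F.sup fun g => (pos g).natAbs : ℕ), Int.ofNat_nonneg _, fun z => ?_⟩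
  obtain ⟨g, hgF, hz⟩ := Set.mem_iUnion₂.1 (hF (Set.mem_univ z))
  refine ⟨g⁻¹, ?_, Set.mem_smul_set_iff_inv_smul_mem.1 hz⟩
  rw [abs_pos_inv, Int.abs_eq_natAbs]
  exact Nat.cast_le.2 (Finset.le_sup (f := fun g => (pos g).natAbs) hgF)

lemma dadLE_one [Nonempty X]
    (hfree : ∀ (g : DihedralGroup 0) (x : X), g • x = x → g = 1)
    (hmin : ∀ x : X, Dense (MulAction.orbit (DihedralGroup 0) x)) :
    DadLE (DihedralGroup 0) X 1 := by
  classical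
  intro E
  set N : ℤ := ((E.sup fun g => (pos g).natAbs : ℕ) : ℤ) + 1 with hN
  have hN1 : 1 ≤ N := by
    have : (0 : ℤ) ≤ ((E.sup fun g => (pos g).natAbs : ℕ) : ℤ) := Int.ofNat_nonneg _
    omega
  have hNE : ∀ g ∈ (E : Set (DihedralGroup 0)), |pos g| ≤ N := by
    intro g hg
    rw [Int.abs_eq_natAbs]
    have h1 : (pos g).natAbs ≤ E.sup fun g => (pos g).natAbs :=
      Finset.le_sup (f := fun g => (pos g).natAbs) hg
    have h2 : ((pos g).natAbs : ℤ) ≤ ((E.sup fun g => (pos g).natAbs : ℕ) : ℤ) :=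
      Nat.cast_le.2 h1
    omega
  obtain ⟨V, hVo, hVne, hVdis⟩ := exists_marker hfree (4*N+2)
  obtain ⟨x₀, hx₀V⟩ := hVne
  obtain ⟨V', hV'o, hxV', hclV'⟩ : ∃ V' : Set X, IsOpen V' ∧ x₀ ∈ V' ∧ closure V' ⊆ V := by
    obtain ⟨u, huo, hsu, hcu⟩ := normal_exists_closure_subset (isClosed_singleton (x := x₀))
      hVo (Set.singleton_subset_iff.2 hx₀V)
    exact ⟨u, huo, hsu rfl, hcu⟩
  obtain ⟨M, hM0, hMsyn⟩ := exists_syndetic hmin hV'o ⟨x₀, hxV'⟩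
  set U0 : Set X := ⋃ (c : DihedralGroup 0) (_ : |pos c| ≤ N), c • V with hU0
  set U1 : Set X := ⋂ (c ∈ {c : DihedralGroup 0 | |pos c| ≤ N}), (c • closure V')ᶜ with hU1
  have hU0mem : ∀ y : X, y ∈ U0 ↔ ∃ c : DihedralGroup 0, |pos c| ≤ N ∧ y ∈ c • V := by
    intro y
    rw [hU0]
    simp only [Set.mem_iUnion, exists_prop]
  have hU1mem : ∀ y : X, y ∈ U1 ↔
      ∀ c : DihedralGroup 0, |pos c| ≤ N → y ∉ c • closure V' := by
    intro y
    rw [hU1]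
    simp only [Set.mem_iInter, Set.mem_compl_iff, Set.mem_setOf_eq]
  refine ⟨![U0, U1], ?_, ?_, ?_⟩
  · intro i
    fin_cases i
    · simpa using isOpen_iUnion fun c => isOpen_iUnion fun _ => hVo.smul c
    · simp only [Fin.mk_one, Matrix.cons_val_one, Matrix.head_cons]
      exact Set.Finite.isOpen_biInter (finite_ball N)
        fun c _ => (isClosed_closure.smul c).isOpen_compl
  · rw [Set.eq_univ_iff_forall]
    intro y
    rw [Set.mem_iUnion]
    by_cases hy : y ∈ U1
    · exact ⟨1, by simpa using hy⟩
    · rw [hU1mem] at hy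
      push_neg at hy
      obtain ⟨c, hcN, hyc⟩ := hy
      refine ⟨0, ?_⟩
      simp only [Matrix.cons_val_zero]
      exact (hU0mem y).2 ⟨c, hcN, Set.smul_set_mono hclV' hyc⟩
  · have hq0 : ∀ L : List (DihedralGroup 0), pos ((L.take 0).reverse.prod) = 0 := by
      intro L; rfl
    have hqsucc : ∀ (L : List (DihedralGroup 0)) (j : ℕ), (hj : j < L.length) →
        (L.take (j+1)).reverse.prod = L[j] * (L.take j).reverse.prod := by
      intro L j hj
      rw [List.take_succ, List.getElem?_eq_getElem hj, List.reverse_append,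
        Option.toList_some, List.reverse_singleton, List.singleton_append, List.prod_cons]
    have hstep : ∀ (L : List (DihedralGroup 0)), (∀ h ∈ L, h ∈ (E : Set (DihedralGroup 0))) →
        ∀ j, j < L.length →
        |pos ((L.take (j+1)).reverse.prod) - pos ((L.take j).reverse.prod)| ≤ N := by
      intro L hLE j hj
      rw [hqsucc L j hj, abs_pos_mul_sub]
      exact hNE _ (hLE _ (List.getElem_mem hj))
    intro i
    fin_cases i
    · -- U0
      simp only [Fin.zero_eta, Matrix.cons_val_zero]
      apply (finite_ball (3*N)).subset
      rintro g ⟨L, hLne, hLE, hgprod, x, hxU, hpath⟩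
      set q : ℕ → DihedralGroup 0 := fun j => (L.take j).reverse.prod with hq
      have hmark : ∀ j, 1 ≤ j → j ≤ L.length → ∃ m : DihedralGroup 0,
          m • x ∈ V ∧ |pos m - pos (q j)| ≤ N := by
        intro j h1 h2
        obtain ⟨c, hcN, hmem⟩ := (hU0mem _).1 (hpath j h1 h2)
        refine ⟨c⁻¹ * q j, ?_, ?_⟩
        · rw [mul_smul]
          exact Set.mem_smul_set_iff_inv_smul_mem.1 hmem
        · have h3 := abs_pos_mul_sub c⁻¹ (q j)
          rw [h3, abs_pos_inv]
          exact hcN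
      choose! m hmV hmN using hmark
      have heq : ∀ j, 1 ≤ j → j ≤ L.length → m j = m 1 := by
        intro j
        induction j with
        | zero => omega
        | succ j ih =>
          intro h1 h2
          rcases Nat.lt_or_ge 1 (j+1) with h | h
          · have hj1 : 1 ≤ j := by omega
            have hjL : j ≤ L.length := by omega
            have key : m (j+1) = m j := by
              by_contra hne
              have hd1 : m (j+1) * (m j)⁻¹ ≠ 1 := by
                simpa [mul_inv_eq_one] using hne
              have habs : |pos (m (j+1) * (m j)⁻¹)| ≤ 4*N+2 := by
                rw [abs_pos_mul_inv]
                have a1 := hmN j hj1 hjL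
                have a2 := hmN (j+1) h1 h2
                have a3 := hstep L hLE j (by omega)
                rw [abs_le] at a1 a2 a3 ⊢
                have e : pos (q (j+1)) - pos (q j) =
                    pos ((L.take (j+1)).reverse.prod) - pos ((L.take j).reverse.prod) := rfl
                omega
              have hdisj := hVdis _ hd1 habs
              have hv1 : (m j) • x ∈ V := hmV j hj1 hjL
              have hv2 : (m (j+1)) • x ∈ V := hmV (j+1) h1 h2
              have hv3 := Set.smul_mem_smul_set (a := m (j+1) * (m j)⁻¹) hv1
              rw [smul_smul, inv_mul_cancel_right] at hv3
              exact Set.disjoint_left.mp hdisj hv2 hv3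
            rw [key]
            exact ih hj1 hjL
          · have : j + 1 = 1 := by omega
            rw [this]
      have hlen : 1 ≤ L.length := by
        have := List.length_pos_iff.2 hLne
        omega
      have e1 := hmN L.length hlen le_rfl
      rw [heq L.length hlen le_rfl] at e1
      have e2 := hmN 1 le_rfl hlen
      have e3 := hstep L hLE 0 (by omega)
      have e0 : pos (q 0) = 0 := hq0 L
      have hgq : g = q L.length := by
        rw [hgprod, hq]
        simp
      simp only [Set.mem_setOf_eq, hgq]
      have e3' : |pos (q 1) - pos (q 0)| ≤ N := e3
      rw [abs_le] at e1 e2 e3' ⊢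
      omega
    · -- U1
      simp only [Fin.mk_one, Matrix.cons_val_one, Matrix.head_cons]
      apply (finite_ball (2*M+1)).subset
      rintro g ⟨L, hLne, hLE, hgprod, x, hxU, hpath⟩
      set q : ℕ → DihedralGroup 0 := fun j => (L.take j).reverse.prod with hq
      set S' : Set (DihedralGroup 0) := {h | h • x ∈ closure V'} with hS'
      have claimA : ∀ w : DihedralGroup 0, w • x ∈ U1 → ∀ h ∈ S', N < |pos h - pos w| := by
        intro w hw h hh
        by_contra hle
        push_neg at hle
        have hcN : |pos (w * h⁻¹)| ≤ N := by
          rw [abs_pos_mul_inv, abs_sub_comm]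
          exact hle
        refine (hU1mem _).1 hw (w * h⁻¹) hcN ?_
        rw [Set.mem_smul_set_iff_inv_smul_mem]
        have he : (w * h⁻¹)⁻¹ • (w • x) = h • x := by
          rw [smul_smul]
          congr 1
          group
        rw [he]
        exact hh
      have hbase : ∀ h ∈ S', N < |pos h - pos (q 0)| := by
        have hx1 : (1 : DihedralGroup 0) • x ∈ U1 := by rw [one_smul]; exact hxU
        intro h hh
        have := claimA 1 hx1 h hh
        rw [hq0 L]
        simpa [show pos (1 : DihedralGroup 0) = 0 from rfl] using this
      have hposq : ∀ j, j ≤ L.length → ∀ h ∈ S', N < |pos h - pos (q j)| := by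
        intro j hj h hh
        rcases Nat.eq_zero_or_pos j with rfl | hj1
        · exact hbase h hh
        · exact claimA (q j) (hpath j hj1 hj) h hh
      have hinv : ∀ j, j ≤ L.length → ∀ h ∈ S',
          pos h < min 0 (pos (q j)) ∨ max 0 (pos (q j)) < pos h := by
        intro j
        induction j with
        | zero =>
          intro _ h hh
          have hb := hbase h hh
          rw [hq0 L] at hb ⊢
          rw [lt_abs] at hb
          omega
        | succ j ih =>
          intro hj h hh
          have ih' := ih (by omega) h hh
          have b1 := hposq j (by omega) h hh
          have b2 := hposq (j+1) hj h hh
          have b3 : |pos (q (j+1)) - pos (q j)| ≤ N := hstep L hLE j (by omega)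
          rw [lt_abs] at b1 b2
          rw [abs_le] at b3
          omega
      have hmarker : ∀ t : ℤ, ∃ h ∈ S', |pos h - t| ≤ M := by
        intro t
        set rt : DihedralGroup 0 := DihedralGroup.r (show ZMod 0 from t) with hrt
        obtain ⟨h', hh'M, hh'⟩ := hMsyn (rt • x)
        refine ⟨h' * rt, ?_, ?_⟩
        · show (h' * rt) • x ∈ closure V'
          rw [mul_smul]
          exact subset_closure hh'
        · have h3 := abs_pos_mul_sub h' rt
          rw [show pos rt = t from rfl] at h3
          rw [h3]
          exact hh'M
      have hgq : g = q L.length := by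
        rw [hgprod, hq]
        simp
      simp only [Set.mem_setOf_eq, hgq]
      have hfin := hinv L.length le_rfl
      by_contra hbig
      push_neg at hbig
      rcases le_or_gt 0 (pos (q L.length)) with hsgn | hsgn
      · obtain ⟨h, hhS, hht⟩ := hmarker (M+1)
        have hd := hfin h hhS
        rw [abs_le] at hht
        have habs : |pos (q L.length)| = pos (q L.length) := abs_of_nonneg hsgn
        rw [habs] at hbig
        omega
      · obtain ⟨h, hhS, hht⟩ := hmarker (-(M+1))
        have hd := hfin h hhS
        rw [abs_le] at hht
        have habs : |pos (q L.length)| = -pos (q L.length) := abs_of_neg hsgn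
        rw [habs] at hbig
        omega

end Action

lemma not_dadLE_zero {X : Type*} [TopologicalSpace X] [Nonempty X]
    [MulAction (DihedralGroup 0) X] : ¬ DadLE (DihedralGroup 0) X 0 := by
  intro h
  obtain ⟨U, hUo, hcov, hfin⟩ := h {DihedralGroup.r 1}
  have hU0 : U 0 = Set.univ := by
    rw [Set.eq_univ_iff_forall]
    intro x
    obtain ⟨i, hi⟩ := Set.mem_iUnion.1 (hcov.symm ▸ Set.mem_univ x)
    rwa [show i = 0 from Fin.fin_one_eq_zero i] at hi
  obtain ⟨x⟩ := ‹Nonempty X›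
  have hmem : ∀ n : ℕ, DihedralGroup.r ((n+1 : ℕ) : ZMod 0) ∈
      dynF (U 0) (({DihedralGroup.r 1} : Finset (DihedralGroup 0)) : Set (DihedralGroup 0)) := by
    intro n
    refine ⟨List.replicate (n+1) (DihedralGroup.r 1), by simp, ?_, ?_, x, ?_, ?_⟩
    · intro h hh
      rw [List.eq_of_mem_replicate hh]
      simp
    · rw [List.reverse_replicate, List.prod_replicate, DihedralGroup.r_one_pow]
    · rw [hU0]; trivial
    · intro j _ _
      rw [hU0]; trivial
  have hinj : Function.Injective (fun n : ℕ => DihedralGroup.r ((n+1 : ℕ) : ZMod 0)) := by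
    intro a b hab
    simp only [DihedralGroup.r.injEq] at hab
    have : ((a+1 : ℕ) : ZMod 0) = ((b+1 : ℕ) : ZMod 0) := hab
    have := Nat.cast_injective (R := ZMod 0) this
    omega
  exact (Set.infinite_of_injective_forall_mem hinj hmem) (hfin 0)

end DadAuxNS

/-- For a free minimal action of the infinite dihedral group on a nonempty
compact Hausdorff space, the dynamic asymptotic dimension equals 1. -/
theorem dad_eq_one_of_dihedral_free_minimal
    (X : Type*) [TopologicalSpace X] [CompactSpace X] [T2Space X] [Nonempty X]
    [MulAction (DihedralGroup 0) X] [ContinuousConstSMul (DihedralGroup 0) X]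
    (hfree : ∀ (g : DihedralGroup 0) (x : X), g • x = x → g = 1)
    (hmin : ∀ x : X, Dense (MulAction.orbit (DihedralGroup 0) x)) :
    dad (DihedralGroup 0) X = 1 := by
  have h1 : DadLE (DihedralGroup 0) X 1 := DadAuxNS.dadLE_one hfree hmin
  have h0 : ¬ DadLE (DihedralGroup 0) X 0 := DadAuxNS.not_dadLE_zero
  unfold dad
  apply le_antisymm
  · exact sInf_le ⟨1, h1, Nat.cast_one⟩
  · refine le_sInf ?_
    rintro b ⟨d, hd, rfl⟩
    match d with
    | 0 => exact absurd hd h0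
    | k+1 =>
      show (1:ℕ∞) ≤ ((k+1 : ℕ) : ℕ∞)
      exact_mod_cast Nat.succ_le_succ (Nat.zero_le k)
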